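/- Let V be a finite-dimensional real inner product space with basis Δ = {α₁,…,αₙ} satisfying ⟨αᵢ, αⱼ⟩ ≤ 0 for i ≠ j, and let {β₁,…,βₙ} be the dual basis defined by ⟨βᵢ, αⱼ⟩ = δᵢⱼ. Then ⟨βᵢ, βⱼ⟩ ≥ 0 for all 1 ≤ i, j ≤ n. -/

import Mathlib

open RealInnerProductSpace

/-- If a basis `α₁,…,αₙ` of a finite-dimensional real inner product space has pairwise
nonpositive inner products, then the vectors of the dual basis (characterized by
`⟪βᵢ, αⱼ⟫ = δᵢⱼ`) have pairwise nonnegative inner products. -/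
theorem dual_basis_inner_nonneg
    {V : Type*} [NormedAddCommGroup V] [InnerProductSpace ℝ V] [FiniteDimensional ℝ V]
    {n : ℕ} (b : Module.Basis (Fin n) ℝ V)
    (hneg : ∀ i j, i ≠ j → ⟪b i, b j⟫ ≤ 0)
    (β : Fin n → V)
    (hdual : ∀ i j, ⟪β i, b j⟫ = if i = j then (1 : ℝ) else 0) :
    ∀ i j, 0 ≤ ⟪β i, β j⟫ := by
  -- Key claim: each `β i` has nonnegative coordinates in the basis `b`.
  have key : ∀ i k, 0 ≤ b.repr (β i) k := by
    intro i k
    by_contra hk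
    push_neg at hk
    set c : Fin n → ℝ := fun k => b.repr (β i) k with hc
    set P : Finset (Fin n) := Finset.univ.filter (fun k => 0 ≤ c k) with hP
    have hkP : k ∉ P := by simp [hP, not_le.mpr hk]; exact hk
    have hmemP : ∀ l, l ∈ P ↔ 0 ≤ c l := by intro l; simp [hP]
    have hmemPc : ∀ l, l ∈ Pᶜ → c l < 0 := by
      intro l hl
      rw [Finset.mem_compl, hmemP] at hl
      exact not_le.mp hl
    set vp : V := ∑ l ∈ P, c l • b l with hvp
    set vm : V := ∑ l ∈ Pᶜ, (-c l) • b l with hvm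
    have hβ : β i = vp - vm := by
      have hrepr : β i = ∑ l, c l • b l := by
        conv_lhs => rw [← b.sum_repr (β i)]
      rw [hrepr, ← Finset.sum_add_sum_compl P (fun l => c l • b l), hvp, hvm]
      simp [neg_smul, sub_eq_add_neg, ← Finset.sum_neg_distrib]
    -- ⟪vp, vm⟫ ≤ 0
    have h1 : ⟪vp, vm⟫ ≤ 0 := by
      rw [hvp, hvm, sum_inner]
      apply Finset.sum_nonpos
      intro a ha
      rw [inner_sum]
      apply Finset.sum_nonpos
      intro l hl
      rw [real_inner_smul_left, real_inner_smul_right]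
      have hal : a ≠ l := by
        intro h; subst h
        exact (Finset.mem_compl.mp hl) ha
      have h1 : 0 ≤ c a := (hmemP a).mp ha
      have h2 : 0 ≤ -c l := le_of_lt (neg_pos.mpr (hmemPc l hl))
      have h3 : ⟪b a, b l⟫ ≤ 0 := hneg a l hal
      exact mul_nonpos_of_nonneg_of_nonpos h1 (mul_nonpos_of_nonneg_of_nonpos h2 h3)
    -- ⟪β i, vm⟫ ≥ 0
    have h2 : 0 ≤ ⟪β i, vm⟫ := by
      rw [hvm, inner_sum]
      apply Finset.sum_nonneg
      intro l hl
      rw [real_inner_smul_right, hdual i l]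
      have h2 : 0 ≤ -c l := le_of_lt (neg_pos.mpr (hmemPc l hl))
      split <;> [simpa using h2; simp]
    -- hence ‖vm‖² ≤ 0, so vm = 0
    have hvm0 : vm = 0 := by
      have : ⟪vm, vm⟫ ≤ 0 := by
        have hvpm : vm = vp - β i := by rw [hβ]; abel
        calc ⟪vm, vm⟫ = ⟪vp, vm⟫ - ⟪β i, vm⟫ := by
              conv_lhs => rw [hvpm]
              rw [inner_sub_left, ← hvpm]
          _ ≤ 0 := by linarith
      exact real_inner_self_nonpos.mp this
    -- linear independence forces the negative coefficients to vanish
    have hd : ∀ l, (if l ∈ Pᶜ then -c l else 0) = 0 := by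
      have hsum : ∑ l, (if l ∈ Pᶜ then -c l else 0) • b l = 0 := by
        rw [← hvm0, hvm]
        have hsplit : ∀ l, (if l ∈ Pᶜ then -c l else 0) • b l
            = if l ∈ Pᶜ then (-c l) • b l else 0 := by
          intro l; split <;> simp
        simp_rw [hsplit]
        rw [Finset.sum_ite_mem]
        simp
      have := Fintype.linearIndependent_iff.mp b.linearIndependent
        (fun l => if l ∈ Pᶜ then -c l else 0) hsum
      exact this
    have := hd k
    rw [if_pos (Finset.mem_compl.mpr hkP)] at this
    have : c k = 0 := by linarith
    exact absurd this (ne_of_lt hk)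
  -- conclude
  intro i j
  have hrepr : β j = ∑ k, b.repr (β j) k • b k := by
    conv_lhs => rw [← b.sum_repr (β j)]
  rw [hrepr, inner_sum]
  apply Finset.sum_nonneg
  intro k _
  rw [real_inner_smul_right, hdual i k]
  have := key j k
  split <;> [simpa using this; simp]
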